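/- As formal power series modulo 4, ∑_{n≥0} (−1)^n d_2(n) q^n ≡ ∏_{i≥1} (1 − q^i) (mod 4). -/

import Mathlib

open PowerSeries
namespace Theorems100

noncomputable section

variable {α : Type*}

open Finset

open scoped Classical

/-- The partial product for the generating function for odd partitions.
TODO: As `m` tends to infinity, this converges (in the `X`-adic topology).

If `m` is sufficiently large, the `i`th coefficient gives the number of odd partitions of the
natural number `i`: proved in `oddGF_prop`.
It is stated for an arbitrary field `α`, though it usually suffices to use `ℚ` or `ℝ`.
-/
def partialOddGF (m : ℕ) [Field α] :=
  ∏ i ∈ range m, (1 - (X : PowerSeries α) ^ (2 * i + 1))⁻¹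

/-- The partial product for the generating function for distinct partitions.
TODO: As `m` tends to infinity, this converges (in the `X`-adic topology).

If `m` is sufficiently large, the `i`th coefficient gives the number of distinct partitions of the
natural number `i`: proved in `distinctGF_prop`.
It is stated for an arbitrary commutative semiring `α`, though it usually suffices to use `ℕ`, `ℚ`
or `ℝ`.
-/
def partialDistinctGF (m : ℕ) [CommSemiring α] :=
  ∏ i ∈ range m, (1 + (X : PowerSeries α) ^ (i + 1))

open Finset.HasAntidiagonal

universe u
variable {ι : Type u}

/-- A convenience constructor for the power series whose coefficients indicate a subset. -/
def indicatorSeries (α : Type*) [Semiring α] (s : Set ℕ) : PowerSeries α :=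
  PowerSeries.mk fun n => if n ∈ s then 1 else 0

theorem coeff_indicator (s : Set ℕ) [Semiring α] (n : ℕ) :
    coeff (R := α) n (indicatorSeries _ s) = if n ∈ s then 1 else 0 :=
  coeff_mk _ _

theorem coeff_indicator_pos (s : Set ℕ) [Semiring α] (n : ℕ) (h : n ∈ s) :
    coeff (R := α) n (indicatorSeries _ s) = 1 := by rw [coeff_indicator, if_pos h]

theorem coeff_indicator_neg (s : Set ℕ) [Semiring α] (n : ℕ) (h : n ∉ s) :
    coeff (R := α) n (indicatorSeries _ s) = 0 := by rw [coeff_indicator, if_neg h]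

theorem constantCoeff_indicator (s : Set ℕ) [Semiring α] :
    constantCoeff (R := α) (indicatorSeries _ s) = if 0 ∈ s then 1 else 0 :=
  rfl

theorem two_series (i : ℕ) [Semiring α] :
    1 + (X : PowerSeries α) ^ i.succ = indicatorSeries α {0, i.succ} := by
  ext n
  simp only [coeff_indicator, coeff_one, coeff_X_pow, Set.mem_insert_iff, Set.mem_singleton_iff,
    map_add]
  cases' n with d
  · simp [(Nat.succ_ne_zero i).symm]
  · simp [Nat.succ_ne_zero d]

theorem num_series' [Field α] (i : ℕ) :
    (1 - (X : PowerSeries α) ^ (i + 1))⁻¹ = indicatorSeries α {k | i + 1 ∣ k} := by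
  rw [PowerSeries.inv_eq_iff_mul_eq_one]
  · ext n
    cases n with
    | zero => simp [mul_sub, zero_pow, constantCoeff_indicator]
    | succ n =>
      simp only [coeff_one, if_false, mul_sub, mul_one, coeff_indicator,
        LinearMap.map_sub, reduceCtorEq]
      simp_rw [coeff_mul, coeff_X_pow, coeff_indicator, @boole_mul _ _ _ _]
      erw [@sum_ite _ _ _ _ _ (fun _ => Classical.propDecidable _), sum_ite]
      simp_rw [@filter_filter _ _ _ _ _, sum_const_zero, add_zero, sum_const, nsmul_eq_mul, mul_one,
        sub_eq_iff_eq_add, zero_add]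
      symm
      split_ifs with h
      · suffices #{a ∈ antidiagonal (n + 1) | i + 1 ∣ a.fst ∧ a.snd = i + 1} = 1 by
          simp only [Set.mem_setOf_eq]; convert congr_arg ((↑) : ℕ → α) this; norm_cast
        rw [card_eq_one]
        cases' h with p hp
        refine ⟨((i + 1) * (p - 1), i + 1), ?_⟩
        ext ⟨a₁, a₂⟩
        simp only [mem_filter, Prod.mk_inj, HasAntidiagonal.mem_antidiagonal, mem_singleton]
        constructor
        · rintro ⟨a_left, ⟨a, rfl⟩, rfl⟩
          refine ⟨?_, rfl⟩
          rw [Nat.mul_sub_left_distrib, ← hp, ← a_left, mul_one, Nat.add_sub_cancel]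
        · rintro ⟨rfl, rfl⟩
          match p with
          | 0 => rw [mul_zero] at hp; cases hp
          | p + 1 => rw [hp]; simp [mul_add]
      · suffices #{a ∈ antidiagonal (n + 1) | i + 1 ∣ a.fst ∧ a.snd = i + 1} = 0 by
          simp only [Set.mem_setOf_eq]; convert congr_arg ((↑) : ℕ → α) this; norm_cast
        rw [card_eq_zero]
        apply eq_empty_of_forall_notMem
        simp only [Prod.forall, mem_filter, not_and, HasAntidiagonal.mem_antidiagonal]
        rintro _ h₁ h₂ ⟨a, rfl⟩ rfl
        apply h
        simp [← h₂]
  · simp [zero_pow]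

def mkOdd : ℕ ↪ ℕ :=
  ⟨fun i => 2 * i + 1, fun x y h => by linarith⟩

-- The main workhorse of the partition theorem proof.
theorem partialGF_prop (α : Type*) [CommSemiring α] (n : ℕ) (s : Finset ℕ) (hs : ∀ i ∈ s, 0 < i)
    (c : ℕ → Set ℕ) (hc : ∀ i, i ∉ s → 0 ∈ c i) :
    #{p : n.Partition | (∀ j, p.parts.count j ∈ c j) ∧ ∀ j ∈ p.parts, j ∈ s} =
      coeff (R := α) n (∏ i ∈ s, indicatorSeries α ((· * i) '' c i)) := by
  simp_rw [coeff_prod, coeff_indicator, prod_boole, sum_boole]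
  apply congr_arg
  simp only [mem_univ, forall_true_left, not_and, not_forall, exists_prop,
    Set.mem_image, not_exists]
  set φ : (a : Nat.Partition n) →
    a ∈ filter (fun p ↦ (∀ (j : ℕ), Multiset.count j p.parts ∈ c j) ∧ ∀ j ∈ p.parts, j ∈ s) univ →
    ℕ →₀ ℕ := fun p _ => {
      toFun := fun i => Multiset.count i p.parts • i
      support := Finset.filter (fun i => i ≠ 0) p.parts.toFinset
      mem_support_toFun := fun a => by
        simp only [smul_eq_mul, ne_eq, mul_eq_zero, Multiset.count_eq_zero]
        rw [not_or, not_not]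
        simp only [Multiset.mem_toFinset, not_not, mem_filter] }
  refine Finset.card_bij φ ?_ ?_ ?_
  · intro a ha
    simp only [φ, not_forall, not_exists, not_and, exists_prop, mem_filter]
    rw [mem_finsuppAntidiag]
    dsimp only [ne_eq, smul_eq_mul, id_eq, eq_mpr_eq_cast, le_eq_subset, Finsupp.coe_mk]
    simp only [mem_univ, forall_true_left, not_and, not_forall, exists_prop,
      mem_filter, true_and] at ha
    refine ⟨⟨?_, fun i ↦ ?_⟩, fun i _ ↦ ⟨a.parts.count i, ha.1 i, rfl⟩⟩
    · conv_rhs => simp [← a.parts_sum]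
      rw [sum_multiset_count_of_subset _ s]
      · simp only [smul_eq_mul]
      · intro i
        simp only [Multiset.mem_toFinset, not_not, mem_filter]
        apply ha.2
    · simp only [ne_eq, Multiset.mem_toFinset, not_not, mem_filter, and_imp]
      exact fun hi _ ↦ ha.2 i hi
  · intro p₁ hp₁ p₂ hp₂ h
    apply Nat.Partition.ext
    simp only [true_and, mem_univ, mem_filter] at hp₁ hp₂
    ext i
    simp only [φ, ne_eq, Multiset.mem_toFinset, not_not, smul_eq_mul, Finsupp.mk.injEq] at h
    by_cases hi : i = 0
    · rw [hi]
      rw [Multiset.count_eq_zero_of_notMem]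
      · rw [Multiset.count_eq_zero_of_notMem]
        intro a; exact Nat.lt_irrefl 0 (hs 0 (hp₂.2 0 a))
      intro a; exact Nat.lt_irrefl 0 (hs 0 (hp₁.2 0 a))
    · rw [← mul_left_inj' hi]
      rw [funext_iff] at h
      exact h.2 i
  · simp only [φ, mem_filter, mem_finsuppAntidiag, mem_univ, exists_prop, true_and, and_assoc]
    rintro f ⟨hf, hf₃, hf₄⟩
    have hf' : f ∈ finsuppAntidiag s n := mem_finsuppAntidiag.mpr ⟨hf, hf₃⟩
    simp only [mem_finsuppAntidiag] at hf'
    refine ⟨⟨∑ i ∈ s, Multiset.replicate (f i / i) i, ?_, ?_⟩, ?_, ?_, ?_⟩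
    · intro i hi
      simp only [exists_prop, Multiset.mem_sum, mem_map, Function.Embedding.coeFn_mk] at hi
      rcases hi with ⟨t, ht, z⟩
      apply hs
      rwa [Multiset.eq_of_mem_replicate z]
    · simp_rw [Multiset.sum_sum, Multiset.sum_replicate, Nat.nsmul_eq_mul]
      rw [← hf'.1]
      refine sum_congr rfl fun i hi => Nat.div_mul_cancel ?_
      rcases hf₄ i hi with ⟨w, _, hw₂⟩
      rw [← hw₂]
      exact dvd_mul_left _ _
    · intro i
      simp_rw [Multiset.count_sum', Multiset.count_replicate, sum_ite_eq']
      split_ifs with h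
      · rcases hf₄ i h with ⟨w, hw₁, hw₂⟩
        rwa [← hw₂, Nat.mul_div_cancel _ (hs i h)]
      · exact hc _ h
    · intro i hi
      rw [Multiset.mem_sum] at hi
      rcases hi with ⟨j, hj₁, hj₂⟩
      rwa [Multiset.eq_of_mem_replicate hj₂]
    · ext i
      simp_rw [Multiset.count_sum', Multiset.count_replicate, sum_ite_eq']
      simp only [ne_eq, Multiset.mem_toFinset, not_not, smul_eq_mul, ite_mul,
        zero_mul, Finsupp.coe_mk]
      split_ifs with h
      · apply Nat.div_mul_cancel
        rcases hf₄ i h with ⟨w, _, hw₂⟩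
        apply Dvd.intro_left _ hw₂
      · apply symm
        rw [← Finsupp.notMem_support_iff]
        exact notMem_mono hf'.2 h
end
end Theorems100
open Finset

namespace D2Aux

open Theorems100 PowerSeries

noncomputable section

open scoped Classical

def mkEven : ℕ ↪ ℕ := ⟨fun i => 2 * (i + 1), fun x y h => by dsimp only at h; omega⟩

theorem mkEven_apply (i : ℕ) : mkEven i = 2 * (i + 1) := rfl

theorem evenDistinctGF_prop (n N : ℕ) (h : n ≤ 2 * N) :
    (Fintype.card {ν : Nat.Partition n // ν.parts.Nodup ∧ ∀ x ∈ ν.parts, Even x} : ℤ) =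
      coeff (R := ℤ) n (∏ i ∈ range N, (1 + (X : PowerSeries ℤ) ^ (2 * (i + 1)))) := by
  have hpos : ∀ i ∈ (range N).map mkEven, 0 < i := by
    simp only [mem_map, mkEven_apply, Function.Embedding.coeFn_mk]
    rintro i ⟨a, -, rfl⟩; omega
  have hP := partialGF_prop ℤ n ((range N).map mkEven) hpos (fun _ => {0, 1})
    (fun _ _ => Or.inl rfl)
  rw [Finset.prod_map] at hP
  have hfac : ∀ i ∈ range N,
      indicatorSeries ℤ ((· * mkEven i) '' {0, 1}) = 1 + (X : PowerSeries ℤ) ^ (2 * (i + 1)) := by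
    intro i _
    have himg : ((· * mkEven i) '' {0, 1} : Set ℕ) = {0, 2 * (i + 1)} := by
      rw [Set.image_pair]
      simp [mkEven_apply]
    rw [himg]
    have h2 := (two_series (α := ℤ) (2 * i + 1)).symm
    have he : (2 * i + 1).succ = 2 * (i + 1) := by omega
    rw [he] at h2
    exact h2
  rw [Finset.prod_congr rfl hfac] at hP
  rw [← hP]
  norm_cast
  rw [Fintype.card_subtype]
  congr 1
  apply Finset.filter_congr
  intro p _
  constructor
  · rintro ⟨h1, h2⟩
    refine ⟨?_, ?_⟩
    · intro j
      have := Multiset.nodup_iff_count_le_one.mp h1 j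
      simp only [Set.mem_insert_iff, Set.mem_singleton_iff]
      omega
    · intro j hj
      simp only [mem_map, mkEven_apply, Function.Embedding.coeFn_mk, mem_range]
      have hj1 : 0 < j := p.parts_pos hj
      have hj2 : j ≤ n := by
        simpa [p.parts_sum] using Multiset.single_le_sum (fun _ _ => Nat.zero_le _) _ hj
      obtain ⟨t, rfl⟩ := h2 j hj
      exact ⟨t - 1, by omega, by omega⟩
  · rintro ⟨h1, h2⟩
    refine ⟨?_, ?_⟩
    · rw [Multiset.nodup_iff_count_le_one]
      intro j
      have := h1 j
      simp only [Set.mem_insert_iff, Set.mem_singleton_iff] at this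
      omega
    · intro x hx
      obtain ⟨a, -, ha⟩ := by
        simpa only [mem_map, mkEven_apply, Function.Embedding.coeFn_mk, mem_range] using h2 x hx
      exact ⟨a + 1, by omega⟩

end
end D2Aux

namespace D2Aux
open Theorems100 PowerSeries Finset
noncomputable section
open scoped Classical

theorem partition_count (n N : ℕ) (h : n ≤ N) :
    (Fintype.card (Nat.Partition n) : ℚ) =
      coeff (R := ℚ) n (∏ i ∈ range N, (1 - (X : PowerSeries ℚ) ^ (i + 1))⁻¹) := by
  have hpos : ∀ i ∈ (range N).map ⟨Nat.succ, Nat.succ_injective⟩, 0 < i := by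
    simp only [mem_map, Function.Embedding.coeFn_mk]
    rintro i ⟨a, -, rfl⟩; exact Nat.succ_pos _
  have hP := partialGF_prop ℚ n ((range N).map ⟨Nat.succ, Nat.succ_injective⟩) hpos
    (fun _ => Set.univ) (fun _ _ => trivial)
  rw [Finset.prod_map] at hP
  have hfac : ∀ i ∈ range N,
      indicatorSeries ℚ ((· * (⟨Nat.succ, Nat.succ_injective⟩ : ℕ ↪ ℕ) i) '' Set.univ) =
        (1 - (X : PowerSeries ℚ) ^ (i + 1))⁻¹ := by
    intro i _
    have hset : ((· * (⟨Nat.succ, Nat.succ_injective⟩ : ℕ ↪ ℕ) i) '' Set.univ : Set ℕ) =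
        {k | i + 1 ∣ k} := by
      ext k
      simp only [Set.image_univ, Set.mem_range, Set.mem_setOf_eq, Function.Embedding.coeFn_mk]
      constructor
      · rintro ⟨p, rfl⟩
        exact Dvd.intro_left p rfl
      · rintro ⟨a, rfl⟩
        exact ⟨a, mul_comm _ _⟩
    rw [hset, num_series']
  rw [Finset.prod_congr rfl hfac] at hP
  rw [← hP]
  norm_cast
  rw [Finset.filter_true_of_mem, Finset.card_univ]
  intro p _
  refine ⟨fun j => trivial, fun j hj => ?_⟩
  simp only [mem_map, Function.Embedding.coeFn_mk, mem_range]
  have hj1 : 0 < j := p.parts_pos hj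
  have hj2 : j ≤ n := by
    simpa [p.parts_sum] using Multiset.single_le_sum (fun _ _ => Nat.zero_le _) _ hj
  exact ⟨j - 1, by omega, by omega⟩

theorem coeff_mul_left_congr {R : Type*} [CommSemiring R] {f f' g : PowerSeries R} {k : ℕ}
    (h : ∀ j ≤ k, coeff (R := R) j f = coeff (R := R) j f') :
    coeff (R := R) k (f * g) = coeff (R := R) k (f' * g) := by
  rw [coeff_mul, coeff_mul]
  refine Finset.sum_congr rfl fun x hx => ?_
  rw [h x.1 (Finset.HasAntidiagonal.antidiagonal.fst_le hx)]

theorem euler_coeff (n N : ℕ) (h : n ≤ N) : ∀ k ≤ n,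
    coeff (R := ℤ) k ((PowerSeries.mk fun j => (Fintype.card (Nat.Partition j) : ℤ)) *
      ∏ i ∈ range N, (1 - (X : PowerSeries ℤ) ^ (i + 1))) = coeff (R := ℤ) k 1 := by
  intro k hk
  have hcast : ∀ a b : ℤ, (a : ℚ) = (b : ℚ) → a = b := fun a b hab => by exact_mod_cast hab
  apply hcast
  have hmap : (PowerSeries.map (Int.castRingHom ℚ))
      ((PowerSeries.mk fun j => (Fintype.card (Nat.Partition j) : ℤ)) *
        ∏ i ∈ range N, (1 - (X : PowerSeries ℤ) ^ (i + 1))) =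
      (PowerSeries.mk fun j => (Fintype.card (Nat.Partition j) : ℚ)) *
        ∏ i ∈ range N, (1 - (X : PowerSeries ℚ) ^ (i + 1)) := by
    rw [map_mul, map_prod]
    have hmk : (PowerSeries.map (Int.castRingHom ℚ))
        (PowerSeries.mk fun j => ((Fintype.card (Nat.Partition j) : ℤ))) =
        PowerSeries.mk fun j => ((Fintype.card (Nat.Partition j)) : ℚ) := by
      ext j
      simp [PowerSeries.coeff_map]
    rw [hmk]
    exact congrArg _ (Finset.prod_congr rfl fun i _ => by
      rw [map_sub, map_one, map_pow, PowerSeries.map_X])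
  have h1 : ((coeff (R := ℤ) k) ((PowerSeries.mk fun j => (Fintype.card (Nat.Partition j) : ℤ)) *
      ∏ i ∈ range N, (1 - (X : PowerSeries ℤ) ^ (i + 1))) : ℚ) =
      coeff (R := ℚ) k ((PowerSeries.mk fun j => (Fintype.card (Nat.Partition j) : ℚ)) *
        ∏ i ∈ range N, (1 - (X : PowerSeries ℚ) ^ (i + 1))) := by
    rw [← hmap, PowerSeries.coeff_map]
    simp
  rw [h1]
  have h2 : coeff (R := ℚ) k ((PowerSeries.mk fun j => (Fintype.card (Nat.Partition j) : ℚ)) *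
      ∏ i ∈ range N, (1 - (X : PowerSeries ℚ) ^ (i + 1))) =
      coeff (R := ℚ) k ((∏ i ∈ range N, (1 - (X : PowerSeries ℚ) ^ (i + 1))⁻¹) *
        ∏ i ∈ range N, (1 - (X : PowerSeries ℚ) ^ (i + 1))) := by
    apply coeff_mul_left_congr
    intro j hj
    rw [PowerSeries.coeff_mk, partition_count j N (le_trans (le_trans hj hk) h)]
  rw [h2, ← Finset.prod_mul_distrib]
  have h3 : ∀ i ∈ range N,
      (1 - (X : PowerSeries ℚ) ^ (i + 1))⁻¹ * (1 - (X : PowerSeries ℚ) ^ (i + 1)) = 1 := by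
    intro i _
    apply PowerSeries.inv_mul_cancel
    simp [zero_pow]
  rw [Finset.prod_congr rfl h3, Finset.prod_const_one]
  simp [PowerSeries.coeff_one]

end
end D2Aux

namespace D2Aux
open PowerSeries Finset
noncomputable section

/-- Coefficientwise congruence mod 4 up to degree `n`. -/
def Eqv (n : ℕ) (f g : PowerSeries ℤ) : Prop := ∀ k ≤ n, (4 : ℤ) ∣ coeff (R := ℤ) k (f - g)

theorem Eqv.of_coeff_eq {n : ℕ} {f g : PowerSeries ℤ}
    (h : ∀ k ≤ n, coeff (R := ℤ) k f = coeff (R := ℤ) k g) : Eqv n f g := fun k hk => by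
  rw [map_sub, h k hk, sub_self]
  exact dvd_zero _

theorem Eqv.refl (n : ℕ) (f : PowerSeries ℤ) : Eqv n f f :=
  Eqv.of_coeff_eq fun _ _ => rfl

theorem Eqv.symm {n : ℕ} {f g : PowerSeries ℤ} (h : Eqv n f g) : Eqv n g f := fun k hk => by
  have : g - f = -(f - g) := by ring
  rw [this, map_neg]
  exact (h k hk).neg_right

theorem Eqv.trans {n : ℕ} {f g h : PowerSeries ℤ} (h1 : Eqv n f g) (h2 : Eqv n g h) :
    Eqv n f h := fun k hk => by
  have : f - h = (f - g) + (g - h) := by ring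
  rw [this, map_add]
  exact dvd_add (h1 k hk) (h2 k hk)

theorem Eqv.mul_right {n : ℕ} {f g : PowerSeries ℤ} (h : Eqv n f g) (u : PowerSeries ℤ) :
    Eqv n (f * u) (g * u) := fun k hk => by
  have he : f * u - g * u = (f - g) * u := by ring
  rw [he, coeff_mul]
  exact Finset.dvd_sum fun x hx =>
    Dvd.dvd.mul_right (h x.1 (le_trans (Finset.HasAntidiagonal.antidiagonal.fst_le hx) hk)) _

theorem Eqv.of_sub_eq_four_mul {n : ℕ} {f g w : PowerSeries ℤ} (h : f = g + 4 * w) :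
    Eqv n f g := fun k hk => by
  rw [h]
  have : g + 4 * w - g = 4 * w := by ring
  rw [this]
  have h4 : (4 : PowerSeries ℤ) = C (4 : ℤ) := by
    simp
  rw [h4, coeff_C_mul]
  exact ⟨coeff (R := ℤ) k w, rfl⟩

/-- Multiplying by something that is `1 + O(X^{n+1})` does not change coefficients up to `n`. -/
theorem Eqv.mul_high {n : ℕ} (f g : PowerSeries ℤ) (hg : (X : PowerSeries ℤ) ^ (n + 1) ∣ g - 1) :
    Eqv n (f * g) f := by
  apply Eqv.of_coeff_eq
  intro k hk
  have h1 : (X : PowerSeries ℤ) ^ (n + 1) ∣ f * g - f := by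
    have : f * g - f = f * (g - 1) := by ring
    rw [this]
    exact Dvd.dvd.mul_left hg f
  have h2 := (PowerSeries.X_pow_dvd_iff).mp h1 k (by omega)
  rw [map_sub, sub_eq_zero] at h2
  exact h2

theorem high_prod {n : ℕ} {ι : Type*} (s : Finset ι) (e : ι → ℕ) (he : ∀ i ∈ s, n < e i) :
    (X : PowerSeries ℤ) ^ (n + 1) ∣ (∏ i ∈ s, (1 - (X : PowerSeries ℤ) ^ e i)) - 1 := by
  classical
  induction s using Finset.induction with
  | empty => simp
  | @insert a s' ha ih =>
    rw [Finset.prod_insert ha]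
    have hdvd : (X : PowerSeries ℤ) ^ (n + 1) ∣ X ^ e a :=
      pow_dvd_pow _ (by have := he a (mem_insert_self a s'); omega)
    have ih' := ih fun i hi => he i (mem_insert_of_mem hi)
    have key : (1 - (X : PowerSeries ℤ) ^ e a) * (∏ i ∈ s', (1 - (X : PowerSeries ℤ) ^ e i)) - 1 =
        ((∏ i ∈ s', (1 - (X : PowerSeries ℤ) ^ e i)) - 1) -
          X ^ e a * ∏ i ∈ s', (1 - (X : PowerSeries ℤ) ^ e i) := by ring
    rw [key]
    exact dvd_sub ih' (Dvd.dvd.mul_right hdvd _)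

/-- Frobenius: squaring a product of `1 - X^e` gives the doubled-exponent product mod 2. -/
theorem sq_prod_one_sub (M : ℕ) (e : ℕ → ℕ) :
    ∃ h : PowerSeries ℤ, (∏ i ∈ range M, (1 - (X : PowerSeries ℤ) ^ e i)) ^ 2 =
      (∏ i ∈ range M, (1 - (X : PowerSeries ℤ) ^ (2 * e i))) + 2 * h := by
  induction M with
  | zero => exact ⟨0, by simp⟩
  | succ m ih =>
    obtain ⟨h, hh⟩ := ih
    rw [prod_range_succ, prod_range_succ]
    refine ⟨(1 - X ^ (2 * e m)) * h + ((X ^ (2 * e m) - X ^ e m) *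
      ((∏ i ∈ range m, (1 - (X : PowerSeries ℤ) ^ (2 * e i))) + 2 * h)), ?_⟩
    have hx : (X : PowerSeries ℤ) ^ (2 * e m) = (X ^ e m) ^ 2 := by
      rw [← pow_mul, mul_comm]
    rw [mul_pow, hh, hx]
    ring

theorem prod_range_two_mul {M : Type*} [CommMonoid M] (m : ℕ) (f : ℕ → M) :
    ∏ i ∈ range (2 * m), f i =
      (∏ j ∈ range m, f (2 * j)) * ∏ j ∈ range m, f (2 * j + 1) := by
  induction m with
  | zero => simp
  | succ k ih =>
    have h2 : 2 * (k + 1) = 2 * k + 1 + 1 := by ring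
    rw [h2, prod_range_succ, prod_range_succ, ih, prod_range_succ, prod_range_succ]
    ac_rfl

theorem rescale_neg_one_X : rescale (-1 : ℤ) X = -X := by
  ext k
  rw [coeff_rescale, map_neg, coeff_X]
  split_ifs with h
  · subst h; norm_num
  · simp

theorem prod_Icc_one_eq_prod_range {M : Type*} [CommMonoid M] (f : ℕ → M) (n : ℕ) :
    ∏ i ∈ Finset.Icc 1 n, f i = ∏ i ∈ range n, f (i + 1) := by
  induction n with
  | zero => simp
  | succ m ih => rw [Finset.prod_Icc_succ_top (by omega), ih, prod_range_succ]

theorem constantCoeff_one_sub_X_pow (m : ℕ) (hm : m ≠ 0) :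
    constantCoeff (R := ℤ) (1 - (X : PowerSeries ℤ) ^ m) = 1 := by
  rw [map_sub, map_one, map_pow, constantCoeff_X, zero_pow hm, sub_zero]

theorem constantCoeff_prod_one_sub {ι : Type*} (s : Finset ι) (e : ι → ℕ)
    (he : ∀ i ∈ s, e i ≠ 0) :
    constantCoeff (R := ℤ) (∏ i ∈ s, (1 - (X : PowerSeries ℤ) ^ e i)) = 1 := by
  rw [map_prod]
  rw [Finset.prod_congr rfl fun i hi => constantCoeff_one_sub_X_pow (e i) (he i hi)]
  exact Finset.prod_const_one

end
end D2Aux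

open Finset

/-- Number of overpartitions of `n` wherein only even parts may be overlined. -/
def d2 (n : ℕ) : ℕ :=
  ∑ m ∈ Finset.range (n + 1),
    Fintype.card (Nat.Partition m) *
      Fintype.card {ν : Nat.Partition (n - m) // ν.parts.Nodup ∧ ∀ x ∈ ν.parts, Even x}

namespace D2Aux
open PowerSeries
noncomputable section

theorem main (n : ℕ) :
    (4 : ℤ) ∣
      PowerSeries.coeff (R := ℤ) n
        ((PowerSeries.mk fun k => (-1) ^ k * (d2 k : ℤ)) -
          ∏ i ∈ Finset.Icc 1 n, (1 - (PowerSeries.X : PowerSeries ℤ) ^ i)) := by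
  classical
  obtain ⟨M, hM⟩ : ∃ x : ℕ, x = n + 1 := ⟨_, rfl⟩
  obtain ⟨N, hN⟩ : ∃ x : ℕ, x = 2 * M := ⟨_, rfl⟩
  obtain ⟨pf, hpf⟩ : ∃ x : PowerSeries ℤ, x = PowerSeries.mk fun k => (Fintype.card (Nat.Partition k) : ℤ) := ⟨_, rfl⟩
  obtain ⟨de, hde⟩ : ∃ g : PowerSeries ℤ, g = PowerSeries.mk fun k =>
    (Fintype.card {ν : Nat.Partition k // ν.parts.Nodup ∧ ∀ x ∈ ν.parts, Even x} : ℤ) :=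
    ⟨_, rfl⟩
  obtain ⟨A, hA⟩ : ∃ x : PowerSeries ℤ, x = PowerSeries.mk fun k => (d2 k : ℤ) := ⟨_, rfl⟩
  obtain ⟨D, hD⟩ : ∃ x : PowerSeries ℤ, x = PowerSeries.mk fun k => (-1) ^ k * (d2 k : ℤ) := ⟨_, rfl⟩
  obtain ⟨E1, hE1⟩ : ∃ x : PowerSeries ℤ, x = ∏ i ∈ range N, (1 - X ^ (i + 1)) := ⟨_, rfl⟩
  obtain ⟨CN, hCN⟩ : ∃ x : PowerSeries ℤ, x = ∏ i ∈ range N, (1 + X ^ (2 * (i + 1))) := ⟨_, rfl⟩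
  obtain ⟨S, hS⟩ : ∃ x : PowerSeries ℤ, x = ∏ j ∈ range M, (1 - X ^ (2 * (j + 1))) := ⟨_, rfl⟩
  obtain ⟨O, hO⟩ : ∃ x : PowerSeries ℤ, x = ∏ j ∈ range M, (1 - X ^ (2 * (2 * j + 1))) := ⟨_, rfl⟩
  obtain ⟨Q, hQ⟩ : ∃ x : PowerSeries ℤ, x = ∏ j ∈ range M, (1 - X ^ (4 * (j + 1))) := ⟨_, rfl⟩
  obtain ⟨T, hT⟩ : ∃ x : PowerSeries ℤ, x = ∏ j ∈ range N, (1 - X ^ (2 * (j + 1))) := ⟨_, rfl⟩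
  obtain ⟨Q', hQ'⟩ : ∃ x : PowerSeries ℤ, x = ∏ j ∈ range N, (1 - X ^ (4 * (j + 1))) := ⟨_, rfl⟩
  obtain ⟨R, hR⟩ : ∃ x : PowerSeries ℤ, x = ∏ j ∈ range M, (1 - X ^ (2 * (M + j + 1))) := ⟨_, rfl⟩
  obtain ⟨R', hR'⟩ : ∃ x : PowerSeries ℤ, x = ∏ j ∈ range M, (1 - X ^ (4 * (M + j + 1))) := ⟨_, rfl⟩
  obtain ⟨F, hF⟩ : ∃ x : PowerSeries ℤ, x = rescale (-1 : ℤ) E1 := ⟨_, rfl⟩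
  obtain ⟨En, hEn⟩ : ∃ x : PowerSeries ℤ, x = ∏ i ∈ range n, (1 - X ^ (i + 1)) := ⟨_, rfl⟩
  obtain ⟨Etail, hEtail⟩ : ∃ x : PowerSeries ℤ, x = ∏ j ∈ range (n + 2), (1 - X ^ (n + j + 1)) := ⟨_, rfl⟩
  -- A is the convolution of pf and de
  have hAeq : A = pf * de := by
    ext k
    rw [hA, coeff_mk, coeff_mul, Finset.Nat.sum_antidiagonal_eq_sum_range_succ_mk]
    simp only [hpf, hde, coeff_mk]
    rw [d2]
    push_cast
    rfl
  -- step 2 : coefficients of A * E1 agree with CN up to degree n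
  have hstep2 : ∀ k ≤ n, coeff (R := ℤ) k (A * E1) = coeff (R := ℤ) k CN := by
    intro k hk
    have h1 : A * E1 = pf * E1 * de := by rw [hAeq]; ring
    have heul : ∀ j ≤ k, coeff (R := ℤ) j (pf * E1) = coeff (R := ℤ) j 1 := fun j hj => by
      rw [hpf, hE1]
      exact euler_coeff n N (by omega) j (by omega)
    have h2 := coeff_mul_left_congr (g := de) (k := k) heul
    rw [h1, h2, one_mul, hde, coeff_mk, hCN]
    exact evenDistinctGF_prop k N (by omega)
  -- rescaling
  have hDF : D = rescale (-1 : ℤ) A := by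
    rw [hD, hA, rescale_mk]
  have hFprod : F = ∏ i ∈ range N, (1 - (-X) ^ (i + 1)) := by
    rw [hF, hE1, map_prod]
    exact Finset.prod_congr rfl fun i _ => by rw [map_sub, map_one, map_pow, rescale_neg_one_X]
  have hCNr : rescale (-1 : ℤ) CN = CN := by
    rw [hCN, map_prod]
    refine Finset.prod_congr rfl fun i _ => ?_
    rw [map_add, map_one, map_pow, rescale_neg_one_X]
    congr 1
    exact Even.neg_pow ⟨i + 1, by ring⟩ X
  have hstep3 : Eqv n (D * F) CN := by
    apply Eqv.of_coeff_eq
    intro k hk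
    have h1 : D * F = rescale (-1 : ℤ) (A * E1) := by rw [map_mul, hDF, hF]
    calc coeff (R := ℤ) k (D * F) = (-1 : ℤ) ^ k * coeff (R := ℤ) k (A * E1) := by rw [h1, coeff_rescale]
      _ = (-1 : ℤ) ^ k * coeff (R := ℤ) k CN := by rw [hstep2 k hk]
      _ = coeff (R := ℤ) k (rescale (-1 : ℤ) CN) := (coeff_rescale _ _ _).symm
      _ = coeff (R := ℤ) k CN := by rw [hCNr]
  -- exact product identities
  have hEF : E1 * F = O * S ^ 2 := by
    rw [hFprod, hE1, ← Finset.prod_mul_distrib, hN, prod_range_two_mul, hO, hS, ← Finset.prod_pow]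
    refine congrArg₂ (· * ·) (Finset.prod_congr rfl fun j _ => ?_)
      (Finset.prod_congr rfl fun j _ => ?_)
    · have hodd : Odd (2 * j + 1) := ⟨j, by ring⟩
      rw [hodd.neg_pow]
      have hx : (X : PowerSeries ℤ) ^ (2 * (2 * j + 1)) = (X ^ (2 * j + 1)) ^ 2 := by
        rw [← pow_mul, mul_comm]
      rw [hx]; ring
    · have heven : Even (2 * j + 1 + 1) := ⟨j + 1, by ring⟩
      rw [heven.neg_pow]
      have he : 2 * j + 1 + 1 = 2 * (j + 1) := by ring
      rw [he]; ring
  have hTOQ : T = O * Q := by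
    rw [hT, hN, prod_range_two_mul, hO, hQ]
    refine congrArg₂ (· * ·) (Finset.prod_congr rfl fun j _ => rfl)
      (Finset.prod_congr rfl fun j _ => ?_)
    have he : 2 * (2 * j + 1 + 1) = 4 * (j + 1) := by ring
    rw [he]
  have hCT : CN * T = Q' := by
    rw [hCN, hT, hQ', ← Finset.prod_mul_distrib]
    refine Finset.prod_congr rfl fun i _ => ?_
    have hx : (X : PowerSeries ℤ) ^ (4 * (i + 1)) = (X ^ (2 * (i + 1))) ^ 2 := by
      rw [← pow_mul]; congr 1; ring
    rw [hx]; ring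
  have hTSR : T = S * R := by
    rw [hT, hS, hR, hN, two_mul, prod_range_add]
  have hQ'R : Q' = Q * R' := by
    rw [hQ', hQ, hR', hN, two_mul, prod_range_add]
  -- Frobenius mod 4
  obtain ⟨hfr, hSsq⟩ := sq_prod_one_sub M fun j => 2 * (j + 1)
  have hSQ : S ^ 2 = Q + 2 * hfr := by
    have hprodeq : (∏ j ∈ range M, (1 - (X : PowerSeries ℤ) ^ (2 * (2 * (j + 1))))) = Q := by
      rw [hQ]
      exact Finset.prod_congr rfl fun j _ => by rw [show 2 * (2 * (j + 1)) = 4 * (j + 1) by ring]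
    rw [hS, hSsq, hprodeq]
  have hS4 : S ^ 4 = Q ^ 2 + 4 * (Q * hfr + hfr ^ 2) := by
    have h4 : S ^ 4 = (S ^ 2) ^ 2 := by ring
    rw [h4, hSQ]; ring
  -- high-order divisibilities
  have hhR : (X : PowerSeries ℤ) ^ (n + 1) ∣ R - 1 := by
    rw [hR]; exact high_prod _ _ fun j hj => by omega
  have hhR' : (X : PowerSeries ℤ) ^ (n + 1) ∣ R' - 1 := by
    rw [hR']; exact high_prod _ _ fun j hj => by omega
  have hhTail : (X : PowerSeries ℤ) ^ (n + 1) ∣ Etail - 1 := by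
    rw [hEtail]; exact high_prod _ _ fun j hj => by omega
  have hE1split : E1 = En * Etail := by
    rw [hE1, hEn, hEtail, show N = n + (n + 2) by omega, prod_range_add]
  -- the chain
  have c1 : Eqv n (D * (F * T * Q)) (Q' * Q) := by
    have h := hstep3.mul_right (T * Q)
    rw [show D * F * (T * Q) = D * (F * T * Q) from by ring,
      show CN * (T * Q) = Q' * Q from by rw [← hCT]; ring] at h
    exact h
  have c2 : Eqv n (Q' * Q) (Q ^ 2) := by
    have h := Eqv.mul_high (n := n) (Q ^ 2) R' hhR'
    rw [show Q ^ 2 * R' = Q' * Q from by rw [hQ'R]; ring] at h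
    exact h
  have c3 : Eqv n (S ^ 4) (Q ^ 2) := Eqv.of_sub_eq_four_mul hS4
  have hbig : En * (F * T * Q) * Etail = S ^ 4 * R ^ 2 := by
    have h1 : En * (F * T * Q) * Etail = E1 * F * T * Q := by rw [hE1split]; ring
    rw [h1, hEF, show O * S ^ 2 * T * Q = S ^ 2 * T * (O * Q) from by ring, ← hTOQ, hTSR]
    ring
  have c4 : Eqv n (En * (F * T * Q)) (S ^ 4) := by
    have h1 : Eqv n (En * (F * T * Q)) (En * (F * T * Q) * Etail) :=
      (Eqv.mul_high _ Etail hhTail).symm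
    rw [hbig] at h1
    have h2 : Eqv n (S ^ 4 * R ^ 2) (S ^ 4 * R) := by
      have := Eqv.mul_high (n := n) (S ^ 4 * R) R hhR
      rw [show S ^ 4 * R * R = S ^ 4 * R ^ 2 from by ring] at this
      exact this
    have h3 : Eqv n (S ^ 4 * R) (S ^ 4) := Eqv.mul_high _ R hhR
    exact h1.trans (h2.trans h3)
  have hIccEn : (∏ i ∈ Finset.Icc 1 n, (1 - (X : PowerSeries ℤ) ^ i)) = En := by
    rw [hEn]
    exact prod_Icc_one_eq_prod_range (fun i => 1 - (X : PowerSeries ℤ) ^ i) n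
  have total : Eqv n (D * (F * T * Q)) (En * (F * T * Q)) :=
    (c1.trans c2).trans ((c4.trans c3).symm)
  -- strip the unit F * T * Q
  have hcF : constantCoeff (R := ℤ) F = 1 := by
    rw [← coeff_zero_eq_constantCoeff_apply, hF, coeff_rescale]
    rw [coeff_zero_eq_constantCoeff_apply, hE1]
    simp only [pow_zero, one_mul]
    exact constantCoeff_prod_one_sub _ _ fun i _ => by omega
  have hcT : constantCoeff (R := ℤ) T = 1 := by
    rw [hT]; exact constantCoeff_prod_one_sub _ _ fun i _ => by omega
  have hcQ : constantCoeff (R := ℤ) Q = 1 := by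
    rw [hQ]; exact constantCoeff_prod_one_sub _ _ fun i _ => by omega
  have hcU : constantCoeff (R := ℤ) (F * T * Q) = ((1 : ℤˣ) : ℤ) := by
    rw [map_mul, map_mul, hcF, hcT, hcQ]; simp
  have hUV : (F * T * Q) * PowerSeries.invOfUnit (F * T * Q) 1 = 1 :=
    PowerSeries.mul_invOfUnit _ 1 hcU
  have final : Eqv n D En := by
    have h := total.mul_right (PowerSeries.invOfUnit (F * T * Q) 1)
    rw [mul_assoc, hUV, mul_one, mul_assoc, hUV, mul_one] at h
    exact h
  rw [hIccEn, ← hD]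
  exact final n le_rfl

end
end D2Aux

/-- `∑_{n≥0} (−1)^n d_2(n) q^n ≡ ∏_{i≥1} (1 − q^i) (mod 4)` coefficientwise;
the coefficient of `q^n` in the infinite product agrees with that of the finite
product over `1 ≤ i ≤ n`. -/
theorem alt_d2_congruent_euler :
    ∀ n : ℕ,
      (4 : ℤ) ∣
        PowerSeries.coeff (R := ℤ) n
          ((PowerSeries.mk fun k => (-1) ^ k * (d2 k : ℤ)) -
            ∏ i ∈ Finset.Icc 1 n, (1 - (PowerSeries.X : PowerSeries ℤ) ^ i)) := by
  exact D2Aux.main
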